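/- The braidings c satisfy the hexagon-type identity a⁻¹ ∘ c_{M⊗N,P} ∘ a⁻¹ = (c_{M,ᴺP}⊗id_N) ∘ a⁻¹ ∘ (id_M ⊗ c_{N,P}), where a denotes the Hom-associativity constraint ã_{M,N,P}((m⊗n)⊗p) = μ(m)⊗(n⊗ς⁻¹(p)) and c_{M,N}(m⊗n) = ν(n₍₀₎)⊗B⁻¹(n₍₁₎)·μ⁻¹(m). -/
import Mathlib


open TensorProduct

/-- A monoidal Hom-Hopf algebra (with bijective antipode) over a field `k`. -/
structure HomHopf (k : Type*) [Field k] (H : Type*) [AddCommGroup H] [Module k H] where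
  mul : H →ₗ[k] H →ₗ[k] H
  one : H
  a : H ≃ₗ[k] H
  comul : H →ₗ[k] H ⊗[k] H
  counit : H →ₗ[k] k
  S : H ≃ₗ[k] H
  hom_assoc : ∀ x y z : H, mul (a x) (mul y z) = mul (mul x y) (a z)
  a_mul : ∀ x y : H, a (mul x y) = mul (a x) (a y)
  mul_one' : ∀ x : H, mul x one = a x
  one_mul' : ∀ x : H, mul one x = a x
  a_one : a one = one
  hom_coassoc : (TensorProduct.map a.symm.toLinearMap comul).comp comul
      = (TensorProduct.assoc k H H H).toLinearMap.comp
          ((TensorProduct.map comul a.symm.toLinearMap).comp comul)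
  comul_a : ∀ x : H, comul (a x) = TensorProduct.map a.toLinearMap a.toLinearMap (comul x)
  counit_comul : ∀ x : H,
    (TensorProduct.lid k H) ((TensorProduct.map counit LinearMap.id) (comul x)) = a.symm x
  comul_counit : ∀ x : H,
    (TensorProduct.rid k H) ((TensorProduct.map LinearMap.id counit) (comul x)) = a.symm x
  counit_a : ∀ x : H, counit (a x) = counit x
  comul_mul : ∀ x y : H, comul (mul x y)
      = (TensorProduct.map (TensorProduct.lift mul) (TensorProduct.lift mul))
          ((TensorProduct.tensorTensorTensorComm k H H H H) (comul x ⊗ₜ[k] comul y))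
  comul_one : comul one = one ⊗ₜ[k] one
  counit_mul : ∀ x y : H, counit (mul x y) = counit x * counit y
  counit_one : counit one = 1
  S_a : ∀ x : H, S (a x) = a (S x)
  antipode_left : ∀ x : H,
    (TensorProduct.lift mul) ((TensorProduct.map S.toLinearMap LinearMap.id) (comul x))
      = counit x • one
  antipode_right : ∀ x : H,
    (TensorProduct.lift mul) ((TensorProduct.map LinearMap.id S.toLinearMap) (comul x))
      = counit x • one

/-- A monoidal Hom-Hopf algebra automorphism. -/
structure IsHomHopfAuto {k : Type*} [Field k] {H : Type*} [AddCommGroup H] [Module k H]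
    (HH : HomHopf k H) (f : H ≃ₗ[k] H) : Prop where
  map_mul : ∀ x y : H, f (HH.mul x y) = HH.mul (f x) (f y)
  map_one : f HH.one = HH.one
  map_comul : ∀ x : H, HH.comul (f x)
      = TensorProduct.map f.toLinearMap f.toLinearMap (HH.comul x)
  map_counit : ∀ x : H, HH.counit (f x) = HH.counit x
  map_a : ∀ x : H, f (HH.a x) = HH.a (f x)

/-- A left-right (A,B)-Yetter-Drinfeld Hom-module over `HH`. -/
structure YDModule {k : Type*} [Field k] {H : Type*} [AddCommGroup H] [Module k H]
    (HH : HomHopf k H) (A B : H ≃ₗ[k] H)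
    (M : Type*) [AddCommGroup M] [Module k M] where
  act : H →ₗ[k] M →ₗ[k] M
  coact : M →ₗ[k] M ⊗[k] H
  mu : M ≃ₗ[k] M
  hom_act : ∀ (h g : H) (m : M), act (HH.a h) (act g m) = act (HH.mul h g) (mu m)
  mu_act : ∀ (h : H) (m : M), mu (act h m) = act (HH.a h) (mu m)
  one_act : ∀ m : M, act HH.one m = mu m
  hom_coact : (TensorProduct.map mu.symm.toLinearMap HH.comul).comp coact
      = (TensorProduct.assoc k M H H).toLinearMap.comp
          ((TensorProduct.map coact HH.a.symm.toLinearMap).comp coact)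
  coact_mu : ∀ m : M, coact (mu m)
      = TensorProduct.map mu.toLinearMap HH.a.toLinearMap (coact m)
  coact_counit : ∀ m : M,
    (TensorProduct.rid k M) ((TensorProduct.map LinearMap.id HH.counit) (coact m)) = mu.symm m
  compat : ∀ (h : H) (m : M) (n : ℕ) (h1 h2 : Fin n → H),
      HH.comul h = ∑ i, h1 i ⊗ₜ[k] h2 i →
      ∀ (p : ℕ) (h21 h22 : Fin n → Fin p → H),
      (∀ i, HH.comul (h2 i) = ∑ j, h21 i j ⊗ₜ[k] h22 i j) →
      ∀ (q : ℕ) (m0 : Fin q → M) (m1 : Fin q → H),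
      coact m = ∑ l, m0 l ⊗ₜ[k] m1 l →
      coact (act h m) = ∑ i, ∑ j, ∑ l,
        act (HH.a (h21 i j)) (m0 l) ⊗ₜ[k]
          HH.mul (HH.mul (B (h22 i j)) (HH.a.symm (m1 l))) (A (HH.S.symm (h1 i)))

lemma exists_fin_rep {k : Type*} [Field k] {M N : Type*} [AddCommGroup M] [Module k M]
    [AddCommGroup N] [Module k N] (t : M ⊗[k] N) :
    ∃ (n : ℕ) (a : Fin n → M) (b : Fin n → N), t = ∑ i, a i ⊗ₜ[k] b i := by
  induction t using TensorProduct.induction_on with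
  | zero => exact ⟨0, ![], ![], by simp⟩
  | tmul m n => exact ⟨1, fun _ => m, fun _ => n, by simp⟩
  | add s r hs hr =>
    obtain ⟨n, a, b, h⟩ := hs; obtain ⟨m, c, d, h2⟩ := hr
    exact ⟨n + m, Fin.append a c, Fin.append b d, by
      simp [Fin.sum_univ_add, Fin.append_left, Fin.append_right, h, h2]⟩

lemma comul_auto_sum {k : Type*} [Field k] {H : Type*} [AddCommGroup H] [Module k H]
    {HH : HomHopf k H} {C : H ≃ₗ[k] H} (hC : IsHomHopfAuto HH C) {n : ℕ} {z : H}
    {u v : Fin n → H} (h : HH.comul z = ∑ i, u i ⊗ₜ[k] v i) :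
    HH.comul (C z) = ∑ i, C (u i) ⊗ₜ[k] C (v i) := by
  rw [hC.map_comul, h, map_sum]; simp

lemma comul_auto_symm_sum {k : Type*} [Field k] {H : Type*} [AddCommGroup H] [Module k H]
    {HH : HomHopf k H} {C : H ≃ₗ[k] H} (hC : IsHomHopfAuto HH C) {n : ℕ} {z : H}
    {u v : Fin n → H} (h : HH.comul z = ∑ i, u i ⊗ₜ[k] v i) :
    HH.comul (C.symm z) = ∑ i, C.symm (u i) ⊗ₜ[k] C.symm (v i) := by
  have h2 := hC.map_comul (C.symm z)
  rw [LinearEquiv.apply_symm_apply, h] at h2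
  have h3 := congrArg (TensorProduct.map C.symm.toLinearMap C.symm.toLinearMap) h2
  rw [← LinearMap.comp_apply, ← TensorProduct.map_comp] at h3
  simpa using h3.symm

lemma comul_a_sum {k : Type*} [Field k] {H : Type*} [AddCommGroup H] [Module k H]
    (HH : HomHopf k H) {n : ℕ} {z : H}
    {u v : Fin n → H} (h : HH.comul z = ∑ i, u i ⊗ₜ[k] v i) :
    HH.comul (HH.a z) = ∑ i, HH.a (u i) ⊗ₜ[k] HH.a (v i) := by
  rw [HH.comul_a, h, map_sum]; simp

/-- Eq. (3.4): a⁻¹_{ᴹ⊗ᴺP,M,N} ∘ c_{M⊗N,P} ∘ a⁻¹_{M,N,P}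
 = (c_{M,ᴺP}⊗id_N) ∘ a⁻¹_{M,ᴺP,N} ∘ (id_M ⊗ c_{N,P}),
with a⁻¹_{X,Y,Z}(x⊗(y⊗z)) = (μX⁻¹(x)⊗y)⊗μZ(z). -/
theorem stmt_14 {k : Type*} [Field k] {H : Type*} [AddCommGroup H] [Module k H]
    {M : Type*} [AddCommGroup M] [Module k M] {N : Type*} [AddCommGroup N] [Module k N]
    {P : Type*} [AddCommGroup P] [Module k P]
    (HH : HomHopf k H) (A B C D E F : H ≃ₗ[k] H)
    (hA : IsHomHopfAuto HH A) (hB : IsHomHopfAuto HH B)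
    (hC : IsHomHopfAuto HH C) (hD : IsHomHopfAuto HH D)
    (hE : IsHomHopfAuto HH E) (hF : IsHomHopfAuto HH F)
    (YM : YDModule HH A B M) (YN : YDModule HH C D N) (YP : YDModule HH E F P)
    -- the action of H on M⊗N (Proposition 3.1)
    (actMN : H →ₗ[k] (M ⊗[k] N) →ₗ[k] (M ⊗[k] N))
    (hactMN : ∀ (h : H) (m : M) (x : N) (n : ℕ) (h1 h2 : Fin n → H),
      HH.comul h = ∑ i, h1 i ⊗ₜ[k] h2 i →
      actMN h (m ⊗ₜ[k] x)
        = ∑ i, YM.act (C (h1 i)) m ⊗ₜ[k] YN.act (C.symm (B (C (h2 i)))) x)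
    -- c_{M⊗N,P}, with (M⊗N) of type (AC, DC⁻¹BC)
    (cMN_P : ((M ⊗[k] N) ⊗[k] P) →ₗ[k] (P ⊗[k] (M ⊗[k] N)))
    (hcMN_P : ∀ (m : M) (x : N) (pp : P) (q : ℕ) (p0 : Fin q → P) (p1 : Fin q → H),
      YP.coact pp = ∑ l, p0 l ⊗ₜ[k] p1 l →
      cMN_P ((m ⊗ₜ[k] x) ⊗ₜ[k] pp)
        = ∑ l, YP.mu (p0 l) ⊗ₜ[k]
            actMN (C.symm (B.symm (C (D.symm (p1 l))))) (YM.mu.symm m ⊗ₜ[k] YN.mu.symm x))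
    -- c_{N,P}
    (cNP : (N ⊗[k] P) →ₗ[k] (P ⊗[k] N))
    (hcNP : ∀ (x : N) (pp : P) (q : ℕ) (p0 : Fin q → P) (p1 : Fin q → H),
      YP.coact pp = ∑ l, p0 l ⊗ₜ[k] p1 l →
      cNP (x ⊗ₜ[k] pp) = ∑ l, YP.mu (p0 l) ⊗ₜ[k] YN.act (D.symm (p1 l)) (YN.mu.symm x))
    -- c_{M,ᴺP}, where ᴺP has coaction p ↦ p₍₀₎ ⊗ CD⁻¹(p₍₁₎)
    (cM_NP : (M ⊗[k] P) →ₗ[k] (P ⊗[k] M))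
    (hcM_NP : ∀ (m : M) (pp : P) (q : ℕ) (p0 : Fin q → P) (p1 : Fin q → H),
      YP.coact pp = ∑ l, p0 l ⊗ₜ[k] p1 l →
      cM_NP (m ⊗ₜ[k] pp)
        = ∑ l, YP.mu (p0 l) ⊗ₜ[k] YM.act (B.symm (C (D.symm (p1 l)))) (YM.mu.symm m)) :
    ∀ w : M ⊗[k] (N ⊗[k] P),
      ((TensorProduct.assoc k P M N).symm.toLinearMap ∘ₗ
        TensorProduct.map YP.mu.symm.toLinearMap
          (TensorProduct.map LinearMap.id YN.mu.toLinearMap))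
        (cMN_P
          (((TensorProduct.assoc k M N P).symm.toLinearMap ∘ₗ
            TensorProduct.map YM.mu.symm.toLinearMap
              (TensorProduct.map LinearMap.id YP.mu.toLinearMap)) w))
      = (TensorProduct.map cM_NP LinearMap.id)
          (((TensorProduct.assoc k M P N).symm.toLinearMap ∘ₗ
            TensorProduct.map YM.mu.symm.toLinearMap
              (TensorProduct.map LinearMap.id YN.mu.toLinearMap))
            ((TensorProduct.map LinearMap.id cNP) w)) := by
  intro w
  induction w using TensorProduct.induction_on with
  | zero => simp
  | add s r hs hr => simp only [map_add, LinearMap.comp_apply] at hs hr ⊢; rw [hs, hr]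
  | tmul m y =>
    induction y using TensorProduct.induction_on with
    | zero => simp
    | add s r hs hr =>
      simp only [TensorProduct.tmul_add, map_add, LinearMap.comp_apply] at hs hr ⊢
      rw [hs, hr]
    | tmul x p =>
      obtain ⟨q, p0, p1, hp⟩ := exists_fin_rep (YP.coact p)
      set f1 : P →ₗ[k] P := YP.mu.toLinearMap ∘ₗ YP.mu.toLinearMap with hf1
      set f2 : H →ₗ[k] M := (YM.act.flip (YM.mu.symm (YM.mu.symm m))) ∘ₗ
        (B.symm.toLinearMap ∘ₗ C.toLinearMap ∘ₗ D.symm.toLinearMap ∘ₗ HH.a.toLinearMap) with hf2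
      set f3 : H →ₗ[k] N := (YN.act.flip x) ∘ₗ
        (HH.a.toLinearMap ∘ₗ D.symm.toLinearMap ∘ₗ HH.a.toLinearMap) with hf3
      set Ψ : P ⊗[k] (H ⊗[k] H) →ₗ[k] (P ⊗[k] M) ⊗[k] N :=
        (TensorProduct.assoc k P M N).symm.toLinearMap ∘ₗ
          TensorProduct.map f1 (TensorProduct.map f2 f3) with hΨ
      have hXY : (TensorProduct.map YP.mu.symm.toLinearMap HH.comul) (YP.coact p)
          = (TensorProduct.assoc k P H H)
              ((TensorProduct.map YP.coact HH.a.symm.toLinearMap) (YP.coact p)) := by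
        simpa using LinearMap.congr_fun YP.hom_coact p
      trans (Ψ ((TensorProduct.map YP.mu.symm.toLinearMap HH.comul) (YP.coact p)))
      · -- left-hand side equals Ψ X
        have hp' : YP.coact (YP.mu p) = ∑ l, YP.mu (p0 l) ⊗ₜ[k] HH.a (p1 l) := by
          rw [YP.coact_mu, hp, map_sum]; simp
        simp only [LinearMap.comp_apply, TensorProduct.map_tmul, LinearEquiv.coe_coe,
          LinearMap.id_coe, id_eq, TensorProduct.assoc_symm_tmul]
        rw [hcMN_P (YM.mu.symm m) x (YP.mu p) q _ _ hp', hp]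
        simp only [map_sum]
        refine Finset.sum_congr rfl fun l _ => ?_
        obtain ⟨n, u, v, hc⟩ := exists_fin_rep (HH.comul (p1 l))
        have hφ : HH.comul (C.symm (B.symm (C (D.symm (HH.a (p1 l))))))
            = ∑ i, C.symm (B.symm (C (D.symm (HH.a (u i)))))
                ⊗ₜ[k] C.symm (B.symm (C (D.symm (HH.a (v i))))) :=
          comul_auto_symm_sum hC (comul_auto_symm_sum hB (comul_auto_sum hC
            (comul_auto_symm_sum hD (comul_a_sum HH hc))))
        simp only [hΨ, LinearMap.comp_apply, TensorProduct.map_tmul, LinearEquiv.coe_coe,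
          LinearMap.id_coe, id_eq]
        rw [hactMN _ _ _ n _ _ hφ, hc]
        simp only [hΨ, hf1, hf2, hf3, LinearMap.comp_apply, TensorProduct.map_tmul,
          TensorProduct.tmul_sum, map_sum, TensorProduct.sum_tmul, LinearEquiv.coe_coe,
          LinearMap.id_coe, id_eq, TensorProduct.assoc_symm_tmul, LinearMap.flip_apply,
          LinearEquiv.apply_symm_apply, LinearEquiv.symm_apply_apply]
        refine Finset.sum_congr rfl fun i _ => ?_
        rw [YN.mu_act, LinearEquiv.apply_symm_apply]
      · -- right-hand side equals Ψ Y
        rw [hXY]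
        symm
        simp only [LinearMap.comp_apply, TensorProduct.map_tmul, LinearEquiv.coe_coe,
          LinearMap.id_coe, id_eq]
        rw [hcNP x p q p0 p1 hp, hp]
        simp only [TensorProduct.tmul_sum, map_sum]
        refine Finset.sum_congr rfl fun l _ => ?_
        obtain ⟨r, p00, p01, hc0⟩ := exists_fin_rep (YP.coact (p0 l))
        have hc0' : YP.coact (YP.mu (p0 l)) = ∑ j, YP.mu (p00 j) ⊗ₜ[k] HH.a (p01 j) := by
          rw [YP.coact_mu, hc0, map_sum]; simp
        simp only [hΨ, LinearMap.comp_apply, TensorProduct.map_tmul, LinearEquiv.coe_coe,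
          LinearMap.id_coe, id_eq, TensorProduct.assoc_symm_tmul]
        rw [hcM_NP (YM.mu.symm m) (YP.mu (p0 l)) r _ _ hc0', hc0]
        simp only [hΨ, hf1, hf2, hf3, LinearMap.comp_apply, TensorProduct.map_tmul,
          TensorProduct.tmul_sum, map_sum, TensorProduct.sum_tmul, LinearEquiv.coe_coe,
          LinearMap.id_coe, id_eq, TensorProduct.assoc_symm_tmul, TensorProduct.assoc_tmul,
          LinearMap.flip_apply, LinearEquiv.apply_symm_apply, LinearEquiv.symm_apply_apply]
        refine Finset.sum_congr rfl fun j _ => ?_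
        rw [YN.mu_act, LinearEquiv.apply_symm_apply]
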